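/- Let φ denote Euler's totient function, and let I be a proper nonzero ideal of R with ℓ = card(R/I) finite, such that ℓ does not divide 2^{φ(n)} and ℓ does not divide n^{φ(n)}. Then every isometry g of the complex plane with g(R) = R satisfying g(x) − x ∈ I for all x ∈ R is a translation by an element of I: there exists t ∈ I such that g(z) = z + t for all z ∈ ℂ. That is, the colour preserving group K equals T_I. -/

import Mathlib

open Complex Polynomial

/-- The primitive `n`-th root of unity `ζ = exp(2πi/n)`. -/
noncomputable def zeta (n : ℕ) : ℂ := Complex.exp (2 * Real.pi * Complex.I / n)

/-- The ring of cyclotomic integers `M_n = ℤ[ζ_n]`, as a subring of `ℂ`. -/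
noncomputable def Rn (n : ℕ) : Subring ℂ := Subring.closure {zeta n}

/-- `ζ_n` as an element of `M_n`. -/
noncomputable def zetaR (n : ℕ) : ↥(Rn n) := ⟨zeta n, Subring.subset_closure rfl⟩

/-- `z ∈ ℂ` lies in the ideal `I` of `Rn n` (viewed inside `ℂ`). -/
def InIdeal (n : ℕ) (I : Ideal ↥(Rn n)) (z : ℂ) : Prop :=
  ∃ w : ↥(Rn n), w ∈ I ∧ (w : ℂ) = z

/-- An isometry of the complex plane: `z ↦ a z + b` or `z ↦ a conj z + b` with `|a| = 1`. -/
def IsIsometry (g : ℂ → ℂ) : Prop :=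
  ∃ a b : ℂ, ‖a‖ = 1 ∧
    ((∀ z, g z = a * z + b) ∨ (∀ z, g z = a * (starRingEnd ℂ) z + b))

/-- An orientation-preserving isometry of the complex plane: `z ↦ a z + b` with `|a| = 1`. -/
def IsOPIsometry (g : ℂ → ℂ) : Prop :=
  ∃ a b : ℂ, ‖a‖ = 1 ∧ ∀ z, g z = a * z + b

/-- `g` is a colour symmetry of the colouring of `Rn n` induced by the ideal `I`. -/
def IsColourSym (n : ℕ) (I : Ideal ↥(Rn n)) (g : ℂ → ℂ) : Prop :=
  ∀ x y : ℂ, x ∈ Rn n → y ∈ Rn n → (InIdeal n I (x - y) ↔ InIdeal n I (g x - g y))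

/-- The colouring induced by `I` is perfect. -/
def IsPerfectColouring (n : ℕ) (I : Ideal ↥(Rn n)) : Prop :=
  ∀ g : ℂ → ℂ, IsIsometry g → g '' (Rn n : Set ℂ) = (Rn n : Set ℂ) → IsColourSym n I g

/-- The colouring induced by `I` is chirally perfect. -/
def IsChirallyPerfectColouring (n : ℕ) (I : Ideal ↥(Rn n)) : Prop :=
  ∀ g : ℂ → ℂ, IsOPIsometry g → g '' (Rn n : Set ℂ) = (Rn n : Set ℂ) → IsColourSym n I g

section Aux

variable {n : ℕ}

lemma zeta_mem : zeta n ∈ Rn n := Subring.subset_closure rfl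

lemma zeta_primitive (hn : n ≠ 0) : IsPrimitiveRoot (zeta n) n :=
  Complex.isPrimitiveRoot_exp n hn

lemma zeta_pow_n (hn : n ≠ 0) : zeta n ^ n = 1 :=
  (zeta_primitive hn).pow_eq_one

lemma abs_zeta (hn : n ≠ 0) : ‖zeta n‖ = 1 := by
  have h := congrArg (‖·‖) (zeta_pow_n hn)
  rw [norm_pow, norm_one] at h
  have h0 : 0 ≤ ‖zeta n‖ := norm_nonneg _
  rcases lt_trichotomy (‖zeta n‖) 1 with hlt | heq | hgt
  · exact absurd h (by have := pow_lt_one₀ h0 hlt hn; exact ne_of_lt this)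
  · exact heq
  · exact absurd h (by have := one_lt_pow₀ hgt hn; exact (ne_of_gt this))

lemma conj_zeta (hn : n ≠ 0) : (starRingEnd ℂ) (zeta n) = zeta n ^ (n - 1) := by
  have h1 : zeta n ^ (n - 1) * zeta n = 1 := by
    rw [← pow_succ, Nat.sub_add_cancel (Nat.one_le_iff_ne_zero.mpr hn)]
    exact zeta_pow_n hn
  have h2 : (zeta n)⁻¹ = (starRingEnd ℂ) (zeta n) := Complex.inv_eq_conj (abs_zeta hn)
  rw [← h2]
  exact inv_eq_of_mul_eq_one_left h1

lemma exists_poly {x : ℂ} (hx : x ∈ Rn n) : ∃ p : ℤ[X], Polynomial.aeval (zeta n) p = x := by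
  have h : x ∈ Algebra.adjoin ℤ ({zeta n} : Set ℂ) := by
    rw [Algebra.adjoin_int]; exact hx
  rw [Algebra.adjoin_singleton_eq_range_aeval] at h
  exact h

lemma Rn_int (hn : n ≠ 0) {x : ℂ} (hx : x ∈ Rn n) : IsIntegral ℤ x := by
  have hζ : IsIntegral ℤ (zeta n) :=
    (Complex.isPrimitiveRoot_exp n hn).isIntegral (Nat.pos_of_ne_zero hn)
  have hle : Rn n ≤ (integralClosure ℤ ℂ).toSubring :=
    Subring.closure_le.mpr (by simpa [Set.singleton_subset_iff, mem_integralClosure_iff] using hζ)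
  exact hle hx

end Aux

section IdealLemmas

variable {n : ℕ} {I : Ideal ↥(Rn n)}

lemma InIdeal.mem_Rn {z : ℂ} (h : InIdeal n I z) : z ∈ Rn n := by
  obtain ⟨w, _, rfl⟩ := h; exact w.2

lemma inIdeal_of_mem {z : ↥(Rn n)} (h : z ∈ I) : InIdeal n I (z : ℂ) := ⟨z, h, rfl⟩

lemma inIdeal_zero : InIdeal n I 0 := ⟨0, zero_mem _, rfl⟩

lemma inIdeal_add {z w : ℂ} (hz : InIdeal n I z) (hw : InIdeal n I w) :
    InIdeal n I (z + w) := by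
  obtain ⟨u, hu, rfl⟩ := hz; obtain ⟨v, hv, rfl⟩ := hw
  exact ⟨u + v, add_mem hu hv, rfl⟩

lemma inIdeal_neg {z : ℂ} (hz : InIdeal n I z) : InIdeal n I (-z) := by
  obtain ⟨u, hu, rfl⟩ := hz
  exact ⟨-u, neg_mem hu, rfl⟩

lemma inIdeal_sub {z w : ℂ} (hz : InIdeal n I z) (hw : InIdeal n I w) :
    InIdeal n I (z - w) := by
  rw [sub_eq_add_neg]; exact inIdeal_add hz (inIdeal_neg hw)

lemma inIdeal_mul {x z : ℂ} (hx : x ∈ Rn n) (hz : InIdeal n I z) :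
    InIdeal n I (x * z) := by
  obtain ⟨u, hu, rfl⟩ := hz
  exact ⟨⟨x, hx⟩ * u, I.mul_mem_left _ hu, rfl⟩

lemma inIdeal_sum {s : Finset ℕ} {f : ℕ → ℂ} (h : ∀ i ∈ s, InIdeal n I (f i)) :
    InIdeal n I (∑ i ∈ s, f i) := by
  classical
  induction s using Finset.induction_on with
  | empty => simpa using inIdeal_zero
  | insert _ _ hx ih =>
      rw [Finset.sum_insert hx]
      exact inIdeal_add (h _ (Finset.mem_insert_self _ _))
        (ih fun i hi => h i (Finset.mem_insert_of_mem hi))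

lemma inIdeal_geom {a : ℂ} (ha : a ∈ Rn n) (h1 : InIdeal n I (1 - a)) :
    ∀ j : ℕ, InIdeal n I (1 - a ^ j) := by
  intro j
  induction j with
  | zero => simpa using inIdeal_zero
  | succ j ih =>
      have h2 : InIdeal n I (a ^ j * (1 - a)) := inIdeal_mul (pow_mem ha j) h1
      have heq : 1 - a ^ (j + 1) = (1 - a ^ j) + a ^ j * (1 - a) := by ring
      rw [heq]
      exact inIdeal_add ih h2

lemma inIdeal_nat_of_pow_eq_one {a : ℂ} (ha : a ∈ Rn n) (h1 : InIdeal n I (1 - a))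
    (hne : a ≠ 1) {d : ℕ} (hd : a ^ d = 1) : InIdeal n I (d : ℂ) := by
  have hsum : ∑ j ∈ Finset.range d, a ^ j = 0 := by
    rw [geom_sum_eq hne, hd, sub_self, zero_div]
  have heq : (d : ℂ) = ∑ j ∈ Finset.range d, (1 - a ^ j) := by
    rw [Finset.sum_sub_distrib, hsum, Finset.sum_const, Finset.card_range, sub_zero,
      nsmul_eq_mul, mul_one]
  rw [heq]
  exact inIdeal_sum fun i _ => inIdeal_geom ha h1 i

end IdealLemmas

section Span

variable {n : ℕ}

lemma span_pow (hn3 : 3 ≤ n) {x : ℂ} (hx : x ∈ Rn n) :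
    ∃ c : ℕ → ℤ, x = ∑ i ∈ Finset.range n.totient, (c i : ℂ) * zeta n ^ i := by
  have hn : n ≠ 0 := by omega
  obtain ⟨p, hp⟩ := exists_poly hx
  have hprim := Complex.isPrimitiveRoot_exp n hn
  have hmin : cyclotomic n ℤ = minpoly ℤ (zeta n) :=
    cyclotomic_eq_minpoly hprim (by omega)
  have hmon : (cyclotomic n ℤ).Monic := cyclotomic.monic n ℤ
  set q := p %ₘ cyclotomic n ℤ with hqdef
  have hc0 : Polynomial.aeval (zeta n) (cyclotomic n ℤ) = 0 := by
    rw [hmin]; exact minpoly.aeval ℤ _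
  have hq : Polynomial.aeval (zeta n) q = x := by
    rw [hqdef, Polynomial.modByMonic_eq_sub_mul_div _ (cyclotomic n ℤ), map_sub, map_mul, hc0, zero_mul,
      sub_zero, hp]
  have hdeg : q.natDegree < n.totient := by
    have htpos : 0 < n.totient := Nat.totient_pos.mpr (by omega)
    rcases eq_or_ne q 0 with h0 | h0
    · rw [h0]; simpa using htpos
    · have h1 : q.degree < (cyclotomic n ℤ).degree := degree_modByMonic_lt p hmon
      have h2 := natDegree_lt_natDegree h0 h1
      rwa [natDegree_cyclotomic] at h2
  refine ⟨fun i => q.coeff i, ?_⟩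
  rw [← hq, Polynomial.aeval_eq_sum_range' hdeg]
  refine Finset.sum_congr rfl fun i _ => ?_
  rw [zsmul_eq_mul]

end Span

section Card

variable {n : ℕ}

set_option maxHeartbeats 1000000 in
set_option synthInstance.maxHeartbeats 400000 in
lemma card_dvd (hn3 : 3 ≤ n) (I : Ideal ↥(Rn n)) {m : ℕ} (hm : 0 < m)
    (h : InIdeal n I ((m : ℕ) : ℂ)) :
    Nat.card (↥(Rn n) ⧸ I) ∣ m ^ n.totient := by
  haveI : NeZero m := ⟨hm.ne'⟩
  set r := n.totient with hr
  have hmI : ((m : ℕ) : ↥(Rn n)) ∈ I := by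
    obtain ⟨w, hw, hwc⟩ := h
    have hwe : w = ((m : ℕ) : ↥(Rn n)) := by
      apply Subtype.ext
      rw [hwc]; push_cast; rfl
    rwa [hwe] at hw
  -- every element of the quotient is killed by m
  have hkill : ∀ y : ↥(Rn n), (m : ℤ) • (Ideal.Quotient.mk I y) = 0 := by
    intro y
    have : (m : ℤ) • (Ideal.Quotient.mk I y) = Ideal.Quotient.mk I (((m : ℕ) : ↥(Rn n)) * y) := by
      rw [zsmul_eq_mul, map_mul]
      norm_cast
    rw [this]
    exact Ideal.Quotient.eq_zero_iff_mem.mpr (I.mul_mem_right _ hmI)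
  -- the additive homs
  let g : Fin r → ZMod m →+ (↥(Rn n) ⧸ I) := fun i =>
    ZMod.lift m ⟨zmultiplesHom _ (Ideal.Quotient.mk I (zetaR n ^ (i : ℕ))), by
      rw [zmultiplesHom_apply]; exact hkill (zetaR n ^ (i : ℕ))⟩
  let f : (Fin r → ZMod m) →+ (↥(Rn n) ⧸ I) :=
    AddMonoidHom.mk' (fun v => ∑ i : Fin r, g i (v i)) (by
      intro v w
      rw [← Finset.sum_add_distrib]
      refine Finset.sum_congr rfl fun i _ => ?_
      simp [map_add])
  have hfs : Function.Surjective f := by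
    intro y
    obtain ⟨x, rfl⟩ := Ideal.Quotient.mk_surjective y
    obtain ⟨c, hc⟩ := span_pow hn3 x.2
    refine ⟨fun i => ((c i : ℤ) : ZMod m), ?_⟩
    have hx : x = ∑ i : Fin r, (c i : ℤ) • (zetaR n ^ (i : ℕ)) := by
      apply Subtype.coe_injective
      push_cast
      rw [hc, Finset.sum_range fun i => (c i : ℂ) * zeta n ^ i]
      refine Finset.sum_congr rfl fun i _ => ?_
      have hzz : ((zetaR n : ↥(Rn n)) : ℂ) = zeta n := rfl
      push_cast
      rw [zsmul_eq_mul, hzz]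
    show ∑ i : Fin r, g i (((c i : ℤ) : ZMod m)) = Ideal.Quotient.mk I x
    rw [hx, map_sum]
    refine Finset.sum_congr rfl fun i _ => ?_
    rw [ZMod.lift_coe]
    show zmultiplesHom _ (Ideal.Quotient.mk I (zetaR n ^ (i : ℕ))) (c i) = _
    rw [zmultiplesHom_apply, ← map_zsmul]
  have h1 : Nat.card (↥(Rn n) ⧸ I) ∣ Nat.card (Fin r → ZMod m) :=
    AddSubgroup.card_dvd_of_surjective f hfs
  have h2 : Nat.card (Fin r → ZMod m) = m ^ r := by
    rw [Nat.card_fun, Nat.card_eq_fintype_card, ZMod.card, Nat.card_eq_fintype_card,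
      Fintype.card_fin]
  rwa [h2] at h1

end Card

section NumField

variable {n : ℕ}

open IntermediateField Module

lemma ord_totient_le (hn3 : 3 ≤ n) {u : ℂ} (hu : u ∈ Rn n) (hford : IsOfFinOrder u) :
    (orderOf u).totient ≤ n.totient := by
  have hn : n ≠ 0 := by omega
  have hprim := zeta_primitive (n := n) hn
  have hζQ : IsIntegral ℚ (zeta n) := (hprim.isIntegral (by omega)).tower_top
  set K := IntermediateField.adjoin ℚ ({zeta n} : Set ℂ) with hK
  haveI : FiniteDimensional ℚ K := IntermediateField.adjoin.finiteDimensional hζQ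
  have hζK : zeta n ∈ K := IntermediateField.subset_adjoin ℚ {zeta n} rfl
  have hRK : ∀ x ∈ Rn n, x ∈ K := by
    intro x hx
    have hle : Rn n ≤ K.toSubfield.toSubring :=
      Subring.closure_le.mpr (by simpa [Set.singleton_subset_iff] using hζK)
    exact hle hx
  set M := orderOf u with hM
  have hM0 : 0 < M := hford.orderOf_pos
  set uK : K := ⟨u, hRK u hu⟩ with huK
  have hprimu : IsPrimitiveRoot uK M := by
    constructor
    · apply Subtype.ext
      push_cast
      exact pow_orderOf_eq_one u
    · intro l hl
      apply orderOf_dvd_of_pow_eq_one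
      have := congrArg (fun x : K => (x : ℂ)) hl
      push_cast at this
      exact this
  have hminu : cyclotomic M ℚ = minpoly ℚ uK := cyclotomic_eq_minpoly_rat hprimu hM0
  have h1 : M.totient = (minpoly ℚ uK).natDegree := by
    rw [← hminu, natDegree_cyclotomic]
  have h2 : (minpoly ℚ uK).natDegree ≤ finrank ℚ K := minpoly.natDegree_le uK
  have h3 : finrank ℚ K = n.totient := by
    rw [hK, IntermediateField.adjoin.finrank hζQ,
      ← cyclotomic_eq_minpoly_rat hprim (by omega), natDegree_cyclotomic]
  omega

end NumField

section Kron

variable {n : ℕ}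

lemma hom_aeval_int {S T : Type*} [CommRing S] [CommRing T] (f : S →+* T) (x : S) (p : ℤ[X]) :
    f (Polynomial.aeval x p) = Polynomial.aeval (f x) p := by
  rw [Polynomial.aeval_def, Polynomial.aeval_def, Polynomial.hom_eval₂]
  congr 1
  exact Subsingleton.elim _ _

lemma hom_aeval_rat {S T : Type*} [CommRing S] [CommRing T] [Algebra ℚ S] [Algebra ℚ T]
    (f : S →+* T) (x : S) (p : ℚ[X]) :
    f (Polynomial.aeval x p) = Polynomial.aeval (f x) p := by
  rw [Polynomial.aeval_def, Polynomial.aeval_def, Polynomial.hom_eval₂]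
  congr 1
  exact Subsingleton.elim _ _

lemma abs_eq_one_of_pow (hn : n ≠ 0) {x : ℂ} (h : x ^ n = 1) : ‖x‖ = 1 := by
  have habs : ‖x‖ ^ n = 1 := by
    rw [← norm_pow, h, norm_one]
  have h0 : 0 ≤ ‖x‖ := norm_nonneg _
  rcases lt_trichotomy (‖x‖) 1 with hlt | heq | hgt
  · exact absurd habs (by have := pow_lt_one₀ h0 hlt hn; exact ne_of_lt this)
  · exact heq
  · exact absurd habs (by have := one_lt_pow₀ hgt hn; exact ne_of_gt this)

lemma kron (hn3 : 3 ≤ n) {a : ℂ} (ha : a ∈ Rn n)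
    (habs : ‖a‖ = 1) :
    IsOfFinOrder a := by
  have hn : n ≠ 0 := by omega
  have hprim := zeta_primitive (n := n) hn
  have hζQ : IsIntegral ℚ (zeta n) := (hprim.isIntegral (by omega)).tower_top
  set K := IntermediateField.adjoin ℚ ({zeta n} : Set ℂ) with hK
  haveI : FiniteDimensional ℚ K := IntermediateField.adjoin.finiteDimensional hζQ
  haveI : NumberField K := ⟨⟩
  have hζK : zeta n ∈ K := IntermediateField.subset_adjoin ℚ {zeta n} rfl
  have hRK : ∀ x ∈ Rn n, x ∈ K := by
    intro x hx
    have hle : Rn n ≤ K.toSubfield.toSubring :=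
      Subring.closure_le.mpr (by simpa [Set.singleton_subset_iff] using hζK)
    exact hle hx
  set ζK : K := ⟨zeta n, hζK⟩ with hζKdef
  set aK : K := ⟨a, hRK a ha⟩ with haKdef
  have hInjK : Function.Injective (algebraMap K ℂ) := (algebraMap K ℂ).injective
  have hint : IsIntegral ℤ aK := by
    have h1 : IsIntegral ℤ a := Rn_int hn ha
    exact (isIntegral_algebraMap_iff hInjK).mp h1
  obtain ⟨p, hp⟩ := exists_poly ha
  set F : ℤ[X] := p * p.comp (X ^ (n - 1)) - 1 with hF
  have haevalF : ∀ x : ℂ, Polynomial.aeval x F =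
      Polynomial.aeval x p * Polynomial.aeval (x ^ (n - 1)) p - 1 := by
    intro x
    rw [hF]
    simp [Polynomial.aeval_comp]
  have hmulconj : a * (starRingEnd ℂ) a = 1 := by
    rw [Complex.mul_conj]
    rw [Complex.normSq_eq_norm_sq, habs]
    norm_num
  have hconj_eq : (starRingEnd ℂ) a = Polynomial.aeval (zeta n ^ (n - 1)) p := by
    rw [← hp, hom_aeval_int, conj_zeta hn]
  have hFζ : Polynomial.aeval (zeta n) F = 0 := by
    rw [haevalF, hp, ← hconj_eq, hmulconj, sub_self]
  have hmindvd : minpoly ℚ (zeta n) ∣ F.map (algebraMap ℤ ℚ) := by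
    apply minpoly.dvd
    rw [Polynomial.aeval_map_algebraMap]
    exact hFζ
  have hnorm : ∀ φ : K →+* ℂ, ‖φ aK‖ = 1 := by
    intro φ
    set ω : ℂ := φ ζK with hω
    have hζKn : ζK ^ n = 1 := by
      apply Subtype.ext
      push_cast
      exact zeta_pow_n hn
    have hωn : ω ^ n = 1 := by
      rw [hω, ← map_pow, hζKn, map_one]
    have hωabs : ‖ω‖ = 1 := abs_eq_one_of_pow hn hωn
    have hωinv : (starRingEnd ℂ) ω = ω ^ (n - 1) := by
      have h1 : ω ^ (n - 1) * ω = 1 := by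
        rw [← pow_succ, Nat.sub_add_cancel (by omega)]
        exact hωn
      rw [← Complex.inv_eq_conj hωabs]
      exact inv_eq_of_mul_eq_one_left h1
    have e1 : minpoly ℚ (zeta n) = minpoly ℚ ζK := by
      have : algebraMap K ℂ ζK = zeta n := rfl
      rw [← this, minpoly.algebraMap_eq hInjK]
    have hωmin : Polynomial.aeval ω (minpoly ℚ ζK) = 0 := by
      rw [hω, ← hom_aeval_rat φ ζK (minpoly ℚ ζK), minpoly.aeval, map_zero]
    have hωF : Polynomial.aeval ω F = 0 := by
      obtain ⟨qq, hqq⟩ := hmindvd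
      have h2 : Polynomial.aeval ω (F.map (algebraMap ℤ ℚ)) = 0 := by
        rw [hqq, map_mul, e1, hωmin, zero_mul]
      rwa [Polynomial.aeval_map_algebraMap] at h2
    have e2 : aK = Polynomial.aeval ζK p := by
      apply Subtype.ext
      have hthis := hom_aeval_int (algebraMap K ℂ) ζK p
      rw [show algebraMap K ℂ ζK = zeta n from rfl] at hthis
      show a = _
      rw [← hp, ← hthis]
      rfl
    have hφa : φ aK = Polynomial.aeval ω p := by
      rw [e2, hom_aeval_int φ ζK p, ← hω]
    have key : φ aK * (starRingEnd ℂ) (φ aK) = 1 := by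
      have hc : (starRingEnd ℂ) (φ aK) = Polynomial.aeval (ω ^ (n - 1)) p := by
        rw [hφa, hom_aeval_int (starRingEnd ℂ) ω p, hωinv]
      rw [hc, hφa]
      have h3 := haevalF ω
      rw [hωF] at h3
      exact sub_eq_zero.mp h3.symm
    have h4 : ((Complex.normSq (φ aK) : ℝ) : ℂ) = 1 := by
      rw [← Complex.mul_conj]; exact key
    have h5 : Complex.normSq (φ aK) = 1 := by exact_mod_cast h4
    have h6 : ‖φ aK‖ ^ 2 = 1 := by rw [Complex.sq_norm]; exact h5
    nlinarith [norm_nonneg (φ aK)]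
  obtain ⟨m, hm0, hm⟩ := NumberField.Embeddings.pow_eq_one_of_norm_eq_one K ℂ hint hnorm
  rw [isOfFinOrder_iff_pow_eq_one]
  refine ⟨m, hm0, ?_⟩
  have h7 := congrArg (algebraMap K ℂ) hm
  rw [map_pow, map_one] at h7
  exact h7

end Kron

section OddDvd

variable {n : ℕ}

lemma odd_order_dvd (hn3 : 3 ≤ n) {a : ℂ} (ha : a ∈ Rn n) (hford : IsOfFinOrder a)
    (hodd : Odd (orderOf a)) : orderOf a ∣ n := by
  have hn : n ≠ 0 := by omega
  have hprim := zeta_primitive (n := n) hn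
  set d := orderOf a with hd
  have hd0 : d ≠ 0 := hford.orderOf_pos.ne'
  rw [← Nat.factorization_le_iff_dvd hd0 hn, Finsupp.le_def]
  intro p
  by_cases hp : p.Prime
  swap
  · simp [Nat.factorization_eq_zero_of_not_prime _ hp]
  set α := d.factorization p with hα
  set β := n.factorization p with hβ
  rcases Nat.eq_zero_or_pos α with hα0 | hαpos
  · simp [← hα, hα0]
  have hpd : p ∣ d := Nat.dvd_of_factorization_pos (by omega)
  have hp2 : p ≠ 2 := by
    rintro rfl
    exact (Nat.not_even_iff_odd.mpr hodd) (even_iff_two_dvd.mpr hpd)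
  have hp3 : 3 ≤ p := by have := hp.two_le; omega
  have hpαd : p ^ α ∣ d := Nat.ordProj_dvd d p
  have hk0 : d / p ^ α ≠ 0 := by
    have h1 : 0 < d / p ^ α := Nat.div_pos (Nat.le_of_dvd (by omega) hpαd)
      (Nat.pow_pos hp.pos)
    omega
  have horder_b : orderOf (a ^ (d / p ^ α)) = p ^ α := by
    rw [orderOf_pow' a hk0, ← hd, Nat.gcd_eq_right (Nat.div_dvd_of_dvd hpαd),
      Nat.div_div_self hpαd hd0]
  have hζord : orderOf (zeta n) = n := hprim.eq_orderOf.symm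
  have hpβn : p ^ β ∣ n := Nat.ordProj_dvd n p
  have hpβ0 : p ^ β ≠ 0 := pow_ne_zero _ hp.pos.ne'
  have horder_z : orderOf (zeta n ^ p ^ β) = n / p ^ β := by
    rw [orderOf_pow' _ hpβ0, hζord, Nat.gcd_eq_right hpβn]
  have hcopp : Nat.Coprime p (n / p ^ β) :=
    (hp.coprime_iff_not_dvd).mpr (Nat.not_dvd_ordCompl hp hn)
  have hcop : Nat.Coprime (p ^ α) (n / p ^ β) := Nat.Coprime.pow_left _ hcopp
  have hford_b : IsOfFinOrder (a ^ (d / p ^ α)) := hford.pow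
  have hford_z : IsOfFinOrder (zeta n ^ p ^ β) := by
    rw [isOfFinOrder_iff_pow_eq_one]
    exact ⟨n, by omega, by rw [← pow_mul, mul_comm, pow_mul, zeta_pow_n hn, one_pow]⟩
  have horder_u : orderOf (a ^ (d / p ^ α) * zeta n ^ p ^ β) = p ^ α * (n / p ^ β) := by
    rw [(Commute.all _ _).orderOf_mul_eq_mul_orderOf_of_coprime
      (by rw [horder_b, horder_z]; exact hcop), horder_b, horder_z]
  have hmem : a ^ (d / p ^ α) * zeta n ^ p ^ β ∈ Rn n :=
    mul_mem (pow_mem ha _) (pow_mem zeta_mem _)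
  have hford_u : IsOfFinOrder (a ^ (d / p ^ α) * zeta n ^ p ^ β) :=
    (Commute.all _ _).isOfFinOrder_mul hford_b hford_z
  have htot := ord_totient_le hn3 hmem hford_u
  rw [horder_u] at htot
  have hsplit : n = p ^ β * (n / p ^ β) := (Nat.ordProj_mul_ordCompl_eq_self n p).symm
  have hcop2 : Nat.Coprime (p ^ β) (n / p ^ β) := Nat.Coprime.pow_left _ hcopp
  have htotn : n.totient = (p ^ β).totient * (n / p ^ β).totient := by
    conv_lhs => rw [hsplit]
    exact Nat.totient_mul hcop2
  rw [Nat.totient_mul hcop, htotn] at htot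
  have hpos' : 0 < (n / p ^ β).totient := Nat.totient_pos.mpr (Nat.ordCompl_pos p hn)
  have hmain : (p ^ α).totient ≤ (p ^ β).totient := Nat.le_of_mul_le_mul_right htot hpos'
  rw [Nat.totient_prime_pow hp hαpos] at hmain
  rcases Nat.eq_zero_or_pos β with hb0 | hbpos
  · exfalso
    rw [hb0, pow_zero, Nat.totient_one] at hmain
    have h1 : 1 ≤ p ^ (α - 1) := Nat.one_le_pow _ _ hp.pos
    have h2 : 2 ≤ p - 1 := by omega
    have : 2 ≤ p ^ (α - 1) * (p - 1) := by
      calc 2 = 1 * 2 := by omega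
        _ ≤ p ^ (α - 1) * (p - 1) := Nat.mul_le_mul h1 h2
    omega
  · rw [Nat.totient_prime_pow hp hbpos] at hmain
    have hple : p ^ (α - 1) ≤ p ^ (β - 1) :=
      Nat.le_of_mul_le_mul_right hmain (by omega)
    have := (Nat.pow_le_pow_iff_right hp.one_lt).mp hple
    omega

end OddDvd

/-- if `ℓ = card(R/I)` is finite and divides neither `2^{φ(n)}` nor
`n^{φ(n)}`, then every colour preserving isometry is a translation by an element of
`I`, i.e. `K = T_I`. -/
theorem stmt18 (n : ℕ) (hn : 3 ≤ n) (hn2 : n % 4 ≠ 2) (I : Ideal ↥(Rn n))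
    (hItop : I ≠ ⊤) (hIbot : I ≠ ⊥)
    (hfin : Nat.card (↥(Rn n) ⧸ I) ≠ 0)
    (hdvd2 : ¬ (Nat.card (↥(Rn n) ⧸ I) ∣ 2 ^ n.totient))
    (hdvdn : ¬ (Nat.card (↥(Rn n) ⧸ I) ∣ n ^ n.totient)) :
    ∀ g : ℂ → ℂ, IsIsometry g → g '' (Rn n : Set ℂ) = (Rn n : Set ℂ) →
      (∀ x ∈ (Rn n : Set ℂ), InIdeal n I (g x - x)) →
      ∃ t : ℂ, InIdeal n I t ∧ ∀ z : ℂ, g z = z + t := by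
  intro g hiso himg hcol
  have hn0 : n ≠ 0 := by omega
  obtain ⟨a, b, habs, hform⟩ := hiso
  have h0R : (0:ℂ) ∈ Rn n := zero_mem _
  have h1R : (1:ℂ) ∈ Rn n := one_mem _
  rcases hform with hrot | href
  · -- rotation case
    have hb : InIdeal n I b := by
      have h := hcol 0 h0R
      rw [hrot 0] at h
      simpa using h
    have hbR : b ∈ Rn n := hb.mem_Rn
    have ha1 : InIdeal n I (a - 1) := by
      have h := hcol 1 h1R
      rw [hrot 1] at h
      have h2 := inIdeal_sub h hb
      have heq : a * 1 + b - 1 - b = a - 1 := by ring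
      rwa [heq] at h2
    have haR : a ∈ Rn n := by
      have h := ha1.mem_Rn
      have h' : a = (a - 1) + 1 := by ring
      rw [h']; exact add_mem h h1R
    by_cases hae : a = 1
    · exact ⟨b, hb, fun z => by rw [hrot z, hae, one_mul]⟩
    · exfalso
      have h1a : InIdeal n I (1 - a) := by
        have h := inIdeal_neg ha1
        rwa [neg_sub] at h
      have hford : IsOfFinOrder a := kron hn haR habs
      set d := orderOf a with hd
      have hd1 : d ≠ 1 := fun h => hae (orderOf_eq_one_iff.mp h)
      have hd0 : d ≠ 0 := hford.orderOf_pos.ne'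
      rcases Nat.even_or_odd d with hev | hodd
      · obtain ⟨e, he⟩ := hev
        have he0 : e ≠ 0 := by omega
        have helt : e < d := by omega
        have hane : a ^ e ≠ 1 := pow_ne_one_of_lt_orderOf he0 helt
        have hsq : a ^ e * a ^ e = 1 := by
          rw [← pow_add, ← he]
          exact pow_orderOf_eq_one a
        have hne : a ^ e = -1 := (mul_self_eq_one_iff.mp hsq).resolve_left hane
        have h2 : InIdeal n I ((2:ℕ) : ℂ) := by
          have h6 := inIdeal_geom haR h1a e
          rw [hne] at h6
          have heq2 : (1 : ℂ) - (-1) = ((2:ℕ):ℂ) := by norm_num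
          rwa [heq2] at h6
        exact hdvd2 (card_dvd hn I (by norm_num) h2)
      · have hdvd : d ∣ n := odd_order_dvd hn haR hford hodd
        have hdI : InIdeal n I ((d:ℕ) : ℂ) :=
          inIdeal_nat_of_pow_eq_one haR h1a hae (pow_orderOf_eq_one a)
        obtain ⟨c, hc⟩ := hdvd
        have hnI : InIdeal n I ((n:ℕ) : ℂ) := by
          have h7 := inIdeal_mul (natCast_mem (Rn n) c) hdI
          have heq7 : ((n:ℕ):ℂ) = ((c:ℕ):ℂ) * ((d:ℕ):ℂ) := by
            rw [hc]; push_cast; ring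
          rw [heq7]; exact h7
        exact hdvdn (card_dvd hn I (by omega) hnI)
  · -- reflection case
    exfalso
    have hb : InIdeal n I b := by
      have h := hcol 0 h0R
      rw [href 0] at h
      simpa using h
    have hbR : b ∈ Rn n := hb.mem_Rn
    have hζI := hcol (zeta n) zeta_mem
    rw [href (zeta n), conj_zeta hn0] at hζI
    have ha1 : InIdeal n I (a - 1) := by
      have h := hcol 1 h1R
      rw [href 1] at h
      have h2 := inIdeal_sub h hb
      have heq : a * (starRingEnd ℂ) 1 + b - 1 - b = a - 1 := by
        rw [map_one]; ring
      rwa [heq] at h2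
    have h3 := inIdeal_sub hζI hb
    have hpowR : zeta n ^ (n-1) ∈ Rn n := pow_mem zeta_mem _
    have h4 := inIdeal_sub h3 (inIdeal_mul hpowR ha1)
    have heq4 : (a * zeta n ^ (n-1) + b - zeta n - b) - zeta n ^ (n-1) * (a - 1)
        = zeta n ^ (n-1) - zeta n := by ring
    rw [heq4] at h4
    have h5 := inIdeal_mul zeta_mem h4
    have hζn : zeta n * zeta n ^ (n-1) = 1 := by
      rw [← pow_succ', Nat.sub_add_cancel (by omega)]
      exact zeta_pow_n hn0
    have heq5 : zeta n * (zeta n ^ (n-1) - zeta n) = 1 - zeta n ^ 2 := by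
      rw [mul_sub, hζn]; ring
    rw [heq5] at h5
    have hζ2ne : zeta n ^ 2 ≠ 1 := by
      intro h
      have hdd := (zeta_primitive hn0).dvd_of_pow_eq_one 2 h
      have := Nat.le_of_dvd (by norm_num) hdd
      omega
    have hpow : (zeta n ^ 2) ^ n = 1 := by
      rw [← pow_mul, mul_comm, pow_mul, zeta_pow_n hn0, one_pow]
    have hnI : InIdeal n I ((n:ℕ):ℂ) :=
      inIdeal_nat_of_pow_eq_one (pow_mem zeta_mem 2) h5 hζ2ne hpow
    exact hdvdn (card_dvd hn I (by omega) hnI)
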